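/- Let Δ ⊆ ℝ⁴ be the convex hull of the five points (6,14,17,65), (1,0,0,0), (0,1,0,0), (0,0,1,0), (0,0,0,1). Then the only lattice points of ℤ⁴ contained in Δ are these five vertices. -/

import Mathlib

set_option maxHeartbeats 1000000 in
private lemma core (n z0 z1 z2 z3 : ℤ) (h1 : 1 ≤ n) (h2 : n ≤ 100)
    (a0 : 6*n ≤ 101*z0) (a1 : 14*n ≤ 101*z1) (a2 : 17*n ≤ 101*z2) (a3 : 65*n ≤ 101*z3)
    (hs : z0+z1+z2+z3 = n+1) : False := by interval_cases n <;> omega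

private lemma fin4 (n z0 z1 z2 z3 : ℤ) (hk : n = 0 ∨ n = 101) (hn : n = z0+z1+z2+z3-1)
    (b0 : 6*n ≤ 101*z0) (b1 : 14*n ≤ 101*z1) (b2 : 17*n ≤ 101*z2) (b3 : 65*n ≤ 101*z3) :
    (z0 = 6 ∧ z1 = 14 ∧ z2 = 17 ∧ z3 = 65) ∨
    (z0 = 1 ∧ z1 = 0 ∧ z2 = 0 ∧ z3 = 0) ∨
    (z0 = 0 ∧ z1 = 1 ∧ z2 = 0 ∧ z3 = 0) ∨
    (z0 = 0 ∧ z1 = 0 ∧ z2 = 1 ∧ z3 = 0) ∨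
    (z0 = 0 ∧ z1 = 0 ∧ z2 = 0 ∧ z3 = 1) := by
  rcases hk with h|h
  · subst h
    have c0 : z0 = 0 ∨ z0 = 1 := by omega
    have c1 : z1 = 0 ∨ z1 = 1 := by omega
    have c2 : z2 = 0 ∨ z2 = 1 := by omega
    have c3 : z3 = 0 ∨ z3 = 1 := by omega
    rcases c0 with h0|h0 <;> rcases c1 with h1|h1 <;> rcases c2 with h2|h2 <;>
      rcases c3 with h3|h3 <;> subst h0 <;> subst h1 <;> subst h2 <;> subst h3 <;>
      omega
  · exact Or.inl ⟨by omega, by omega, by omega, by omega⟩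

theorem stmt_9 (V : Set (Fin 4 → ℝ))
    (hV : V = {![6, 14, 17, 65], ![1, 0, 0, 0], ![0, 1, 0, 0], ![0, 0, 1, 0], ![0, 0, 0, 1]})
    (Δ : Set (Fin 4 → ℝ)) (hΔ : Δ = convexHull ℝ V) :
    ∀ z : Fin 4 → ℤ, (fun i => (z i : ℝ)) ∈ Δ → (fun i => (z i : ℝ)) ∈ V := by
  intro z hz
  classical
  set v0 : Fin 4 → ℝ := ![6, 14, 17, 65] with hv0
  set v1 : Fin 4 → ℝ := ![1, 0, 0, 0] with hv1
  set v2 : Fin 4 → ℝ := ![0, 1, 0, 0] with hv2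
  set v3 : Fin 4 → ℝ := ![0, 0, 1, 0] with hv3
  set v4 : Fin 4 → ℝ := ![0, 0, 0, 1] with hv4
  have hVs : V = (↑({v0, v1, v2, v3, v4} : Finset (Fin 4 → ℝ)) : Set (Fin 4 → ℝ)) := by
    rw [hV]; simp
  rw [hΔ, hVs, Finset.mem_convexHull'] at hz
  obtain ⟨w, hw0, hw1, hwz⟩ := hz
  have ne01 : v0 ≠ v1 := fun h => by have := congrFun h 0; simp [hv0, hv1] at this
  have ne02 : v0 ≠ v2 := fun h => by have := congrFun h 0; simp [hv0, hv2] at this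
  have ne03 : v0 ≠ v3 := fun h => by have := congrFun h 0; simp [hv0, hv3] at this
  have ne04 : v0 ≠ v4 := fun h => by have := congrFun h 0; simp [hv0, hv4] at this
  have ne12 : v1 ≠ v2 := fun h => by have := congrFun h 0; simp [hv1, hv2] at this
  have ne13 : v1 ≠ v3 := fun h => by have := congrFun h 0; simp [hv1, hv3] at this
  have ne14 : v1 ≠ v4 := fun h => by have := congrFun h 0; simp [hv1, hv4] at this
  have ne23 : v2 ≠ v3 := fun h => by have := congrFun h 1; simp [hv2, hv3] at this
  have ne24 : v2 ≠ v4 := fun h => by have := congrFun h 1; simp [hv2, hv4] at this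
  have ne34 : v3 ≠ v4 := fun h => by have := congrFun h 2; simp [hv3, hv4] at this
  rw [show ({v0, v1, v2, v3, v4} : Finset (Fin 4 → ℝ)) = insert v0 (insert v1 (insert v2 (insert v3 {v4}))) from rfl] at hw0 hw1 hwz
  rw [Finset.sum_insert (by simp [ne01, ne02, ne03, ne04]),
      Finset.sum_insert (by simp [ne12, ne13, ne14]),
      Finset.sum_insert (by simp [ne23, ne24]),
      Finset.sum_insert (by simp [ne34]), Finset.sum_singleton] at hw1 hwz
  have hnn : 0 ≤ w v0 ∧ 0 ≤ w v1 ∧ 0 ≤ w v2 ∧ 0 ≤ w v3 ∧ 0 ≤ w v4 := by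
    refine ⟨hw0 _ (by simp), hw0 _ (by simp), hw0 _ (by simp), hw0 _ (by simp), hw0 _ (by simp)⟩
  obtain ⟨p0, p1, p2, p3, p4⟩ := hnn
  have e0 := congrFun hwz 0
  have e1 := congrFun hwz 1
  have e2 := congrFun hwz 2
  have e3 := congrFun hwz 3
  simp only [hv0, hv1, hv2, hv3, hv4, Pi.add_apply, Pi.smul_apply, smul_eq_mul,
    Matrix.cons_val_zero, Matrix.cons_val_one, Matrix.head_cons, Matrix.cons_val_two,
    Matrix.tail_cons, Matrix.cons_val_three, mul_one, mul_zero, add_zero, zero_add] at e0 e1 e2 e3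
  -- arithmetic part
  set n : ℤ := z 0 + z 1 + z 2 + z 3 - 1 with hn
  have hnr : (n : ℝ) = 101 * w v0 := by push_cast [hn]; linarith
  have hn0 : 0 ≤ n := by
    have : (0:ℝ) ≤ (n:ℝ) := by rw [hnr]; positivity
    exact_mod_cast this
  have hn1 : n ≤ 101 := by
    have : (n:ℝ) ≤ 101 := by rw [hnr]; nlinarith
    exact_mod_cast this
  have b0 : 6 * n ≤ 101 * z 0 := by
    have : (6 * n : ℝ) ≤ 101 * (z 0 : ℝ) := by rw [hnr]; nlinarith
    exact_mod_cast this
  have b1 : 14 * n ≤ 101 * z 1 := by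
    have : (14 * n : ℝ) ≤ 101 * (z 1 : ℝ) := by rw [hnr]; nlinarith
    exact_mod_cast this
  have b2 : 17 * n ≤ 101 * z 2 := by
    have : (17 * n : ℝ) ≤ 101 * (z 2 : ℝ) := by rw [hnr]; nlinarith
    exact_mod_cast this
  have b3 : 65 * n ≤ 101 * z 3 := by
    have : (65 * n : ℝ) ≤ 101 * (z 3 : ℝ) := by rw [hnr]; nlinarith
    exact_mod_cast this
  have key : n = 0 ∨ n = 101 := by
    by_contra h
    push_neg at h
    have h1 : 1 ≤ n := by omega
    have h2 : n ≤ 100 := by omega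
    have hsum : z 0 + z 1 + z 2 + z 3 = n + 1 := by omega
    exact core n (z 0) (z 1) (z 2) (z 3) h1 h2 b0 b1 b2 b3 hsum
  have H : (z 0 = 6 ∧ z 1 = 14 ∧ z 2 = 17 ∧ z 3 = 65) ∨
      (z 0 = 1 ∧ z 1 = 0 ∧ z 2 = 0 ∧ z 3 = 0) ∨
      (z 0 = 0 ∧ z 1 = 1 ∧ z 2 = 0 ∧ z 3 = 0) ∨
      (z 0 = 0 ∧ z 1 = 0 ∧ z 2 = 1 ∧ z 3 = 0) ∨
      (z 0 = 0 ∧ z 1 = 0 ∧ z 2 = 0 ∧ z 3 = 1) :=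
    fin4 n (z 0) (z 1) (z 2) (z 3) key hn b0 b1 b2 b3
  rw [hV]
  simp only [Set.mem_insert_iff, Set.mem_singleton_iff]
  have h2' : ∀ m : ℤ, z 2 = m → z ⟨2, by norm_num⟩ = m := fun m h => h
  have h3' : ∀ m : ℤ, z 3 = m → z ⟨3, by norm_num⟩ = m := fun m h => h
  rcases H with ⟨h0,h1,h2,h3⟩|⟨h0,h1,h2,h3⟩|⟨h0,h1,h2,h3⟩|⟨h0,h1,h2,h3⟩|⟨h0,h1,h2,h3⟩
  · exact Or.inl (by rw [hv0]; funext i; fin_cases i <;> norm_num [h0, h1, h2' _ h2, h3' _ h3])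
  · exact Or.inr (Or.inl (by rw [hv1]; funext i; fin_cases i <;> norm_num [h0, h1, h2' _ h2, h3' _ h3]))
  · exact Or.inr (Or.inr (Or.inl (by rw [hv2]; funext i; fin_cases i <;> norm_num [h0, h1, h2' _ h2, h3' _ h3])))
  · exact Or.inr (Or.inr (Or.inr (Or.inl (by rw [hv3]; funext i; fin_cases i <;> norm_num [h0, h1, h2' _ h2, h3' _ h3]))))
  · exact Or.inr (Or.inr (Or.inr (Or.inr (by rw [hv4]; funext i; fin_cases i <;> norm_num [h0, h1, h2' _ h2, h3' _ h3]))))
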